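/- Define a sequence a : ℕ → ℤ (depending on an integer parameter A) by a(0)=1, a(1)=-1, a(2)=A, and for n ≥ 3, a(n) = -(1/2)·∑_{k=0}^{n-1} a(k)·C(n,k)·2^{n-k}. Then a(4)=0, and more generally a(2k)=0 for every k ≥ 2. -/

import Mathlib

open Finset

lemma inv_lemma (u : ℕ → ℤ) (n : ℕ) :
    ∑ j ∈ range (n+1), (n.choose j : ℤ) * 2^(n-j) *
      (∑ k ∈ range (j+1), u k * (j.choose k : ℤ) * (-2)^(j-k)) = u n := by
  have hext : ∀ j ∈ range (n+1),
      (n.choose j : ℤ) * 2^(n-j) * (∑ k ∈ range (j+1), u k * (j.choose k : ℤ) * (-2)^(j-k))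
      = ∑ k ∈ range (n+1), (n.choose j : ℤ) * 2^(n-j) * (u k * (j.choose k : ℤ) * (-2)^(j-k)) := by
    intro j hj
    rw [mem_range] at hj
    rw [mul_sum]
    apply Finset.sum_subset
    · intro k hk; rw [mem_range] at *; omega
    · intro k _ hk
      rw [mem_range, not_lt] at hk
      have : j.choose k = 0 := Nat.choose_eq_zero_of_lt (by omega)
      simp [this]
  rw [sum_congr rfl hext, Finset.sum_comm]
  have hinner : ∀ k ∈ range (n+1),
      (∑ j ∈ range (n+1), (n.choose j : ℤ) * 2^(n-j) * (u k * (j.choose k : ℤ) * (-2)^(j-k)))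
      = u k * (n.choose k : ℤ) * (if k = n then 1 else 0) := by
    intro k hk
    rw [mem_range] at hk
    have hkn : k ≤ n := by omega
    have h0 : (∑ j ∈ range (n+1), (n.choose j : ℤ) * 2^(n-j) * (u k * (j.choose k : ℤ) * (-2)^(j-k)))
        = ∑ j ∈ Finset.Ico k (n+1), (n.choose j : ℤ) * 2^(n-j) * (u k * (j.choose k : ℤ) * (-2)^(j-k)) := by
      refine (Finset.sum_subset ?_ ?_).symm
      · intro j hj; rw [Finset.mem_Ico] at hj; rw [mem_range]; omega
      · intro j _ hj
        rw [Finset.mem_Ico, not_and, not_lt] at hj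
        rcases Nat.lt_or_ge j k with h | h
        · have : j.choose k = 0 := Nat.choose_eq_zero_of_lt h
          simp [this]
        · have := hj h
          rw [mem_range] at *; omega
    rw [h0, Finset.sum_Ico_eq_sum_range]
    have hcard : n + 1 - k = n - k + 1 := by omega
    rw [hcard]
    have h2 : ∀ i ∈ range (n-k+1),
        (n.choose (k+i) : ℤ) * 2^(n-(k+i)) * (u k * ((k+i).choose k : ℤ) * (-2)^(k+i-k))
        = u k * (n.choose k : ℤ) * (((n-k).choose i : ℤ) * (-2)^i * 2^(n-k-i)) := by
      intro i hi
      rw [mem_range] at hi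
      have hc : n.choose (k+i) * (k+i).choose k = n.choose k * (n-k).choose i := by
        rw [Nat.choose_mul (n := n) (k := k+i) (s := k) (by omega), Nat.add_sub_cancel_left]
      have hc' : ((n.choose (k+i)) : ℤ) * ((k+i).choose k : ℤ) = (n.choose k : ℤ) * ((n-k).choose i : ℤ) := by
        exact_mod_cast congrArg (Nat.cast : ℕ → ℤ) hc
      have hexp : n - (k+i) = n - k - i := by omega
      have hi2 : k + i - k = i := by omega
      rw [hexp, hi2]
      linear_combination 2^(n-k-i) * u k * (-2)^i * hc'
    rw [sum_congr rfl h2, ← Finset.mul_sum]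
    have hbin : (∑ i ∈ range (n-k+1), ((n-k).choose i : ℤ) * (-2)^i * 2^(n-k-i)) = ((-2) + 2)^(n-k) := by
      rw [add_pow]
      apply Finset.sum_congr rfl
      intro i hi
      ring
    rw [hbin]
    simp only [neg_add_cancel]
    rcases eq_or_lt_of_le hkn with h | h
    · simp [h]
    · rw [zero_pow (by omega : n - k ≠ 0)]
      simp [Nat.ne_of_lt h]
  rw [sum_congr rfl hinner]
  simp only [mul_ite, mul_one, mul_zero]
  rw [Finset.sum_ite_eq' (range (n+1)) n (fun k => u k * (n.choose k : ℤ))]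
  simp

def qq (A : ℤ) : ℕ → ℤ := fun n => if n = 0 then 2 else if n = 2 then 2*A else 0

theorem stmt_0 (A : ℤ) (a : ℕ → ℤ)
    (h0 : a 0 = 1) (h1 : a 1 = -1) (h2 : a 2 = A)
    (hrec : ∀ n, 3 ≤ n →
      2 * a n = -∑ k ∈ Finset.range n, a k * (n.choose k : ℤ) * 2 ^ (n - k)) :
    a 4 = 0 ∧ ∀ k, 2 ≤ k → a (2 * k) = 0 := by
  -- Step 1: uniform recursion
  have hR : ∀ n, ∑ k ∈ range (n+1), a k * (n.choose k : ℤ) * 2^(n-k) = qq A n - a n := by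
    intro n
    match n with
    | 0 => simp [qq, h0]
    | 1 =>
      rw [Finset.sum_range_succ, Finset.sum_range_one]
      simp [qq, h0, h1]
    | 2 =>
      rw [Finset.sum_range_succ, Finset.sum_range_succ, Finset.sum_range_one]
      simp [qq, h0, h1, h2]
      ring
    | (m+3) =>
      rw [Finset.sum_range_succ]
      have h3 := hrec (m+3) (by omega)
      have hq : qq A (m+3) = 0 := by simp [qq]
      rw [hq]
      simp only [Nat.choose_self, Nat.sub_self, pow_zero, Nat.cast_one]
      linarith [h3]
  -- Step 2: signed version
  have hR' : ∀ j, ∑ k ∈ range (j+1), ((-1:ℤ)^k * a k) * (j.choose k : ℤ) * (-2)^(j-k)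
      = (-1)^j * (qq A j - a j) := by
    intro j
    rw [← hR j, Finset.mul_sum]
    apply Finset.sum_congr rfl
    intro k hk
    rw [mem_range] at hk
    have hsign : ((-1:ℤ))^j = (-1)^k * (-1)^(j-k) := by
      rw [← pow_add]; congr 1; omega
    rw [show ((-2:ℤ)) = (-1)*2 by norm_num, mul_pow, hsign]
    ring
  -- Step 3: apply inversion
  have key : ∀ n, ∑ j ∈ range (n+1), (n.choose j : ℤ) * 2^(n-j) * ((-1)^j * (qq A j - a j))
      = (-1)^n * a n := by
    intro n
    have h := inv_lemma (fun k => (-1:ℤ)^k * a k) n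
    calc ∑ j ∈ range (n+1), (n.choose j : ℤ) * 2^(n-j) * ((-1)^j * (qq A j - a j))
        = ∑ j ∈ range (n+1), (n.choose j : ℤ) * 2^(n-j) *
            (∑ k ∈ range (j+1), ((-1:ℤ)^k * a k) * (j.choose k : ℤ) * (-2)^(j-k)) := by
          apply Finset.sum_congr rfl; intro j _; rw [hR' j]
      _ = (-1)^n * a n := h
  -- Step 4: signs disappear on qq
  have hQ : ∀ j, ((-1:ℤ))^j * qq A j = qq A j := by
    intro j
    by_cases hj0 : j = 0
    · simp [hj0, qq]
    · by_cases hj2 : j = 2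
      · simp [hj2, qq]
      · simp [qq, hj0, hj2]
  -- Step 5: the sequence E
  set E : ℕ → ℤ := fun j => a j + (-1)^j * a j - qq A j with hEdef
  have hE : ∀ n, ∑ j ∈ range (n+1), (n.choose j : ℤ) * 2^(n-j) * E j = - E n := by
    intro n
    have k1 := hR n
    have k2 := key n
    have hsplit : ∑ j ∈ range (n+1), (n.choose j : ℤ) * 2^(n-j) * E j
        = (∑ j ∈ range (n+1), (n.choose j : ℤ) * 2^(n-j) * a j)
          + (∑ j ∈ range (n+1), (n.choose j : ℤ) * 2^(n-j) * ((-1)^j * a j))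
          - (∑ j ∈ range (n+1), (n.choose j : ℤ) * 2^(n-j) * qq A j) := by
      rw [← Finset.sum_add_distrib, ← Finset.sum_sub_distrib]
      apply Finset.sum_congr rfl
      intro j _
      simp only [hEdef]
      ring
    have k1' : ∑ j ∈ range (n+1), (n.choose j : ℤ) * 2^(n-j) * a j
        = ∑ j ∈ range (n+1), a j * (n.choose j : ℤ) * 2^(n-j) := by
      apply Finset.sum_congr rfl; intro j _; ring
    have k2' : (∑ j ∈ range (n+1), (n.choose j : ℤ) * 2^(n-j) * qq A j)
          - (∑ j ∈ range (n+1), (n.choose j : ℤ) * 2^(n-j) * ((-1)^j * a j))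
        = (-1)^n * a n := by
      rw [← k2, ← Finset.sum_sub_distrib]
      apply Finset.sum_congr rfl
      intro j _
      linear_combination (-((n.choose j : ℤ) * 2^(n-j))) * (hQ j)
    have hEn : E n = a n + (-1)^n * a n - qq A n := rfl
    rw [hsplit, k1', k1, hEn]
    linarith [k2']
  -- Step 6: E is identically zero
  have hE0 : ∀ n, E n = 0 := by
    intro n
    induction n using Nat.strong_induction_on with
    | _ n ih =>
      have h := hE n
      rw [Finset.sum_range_succ] at h
      have hz : ∑ j ∈ range n, (n.choose j : ℤ) * 2^(n-j) * E j = 0 := by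
        apply Finset.sum_eq_zero
        intro j hj
        rw [mem_range] at hj
        rw [ih j hj]
        ring
      rw [hz] at h
      simp only [Nat.choose_self, Nat.sub_self, pow_zero, Nat.cast_one, zero_add, one_mul,
        mul_one] at h
      linarith
  -- Step 7: conclude
  have main : ∀ k, 2 ≤ k → a (2*k) = 0 := by
    intro k hk
    have h := hE0 (2*k)
    have hpow : ((-1:ℤ))^(2*k) = 1 := by
      rw [pow_mul]; norm_num
    have hq : qq A (2*k) = 0 := by
      have : 2*k ≠ 0 := by omega
      have : 2*k ≠ 2 := by omega
      simp [qq, *]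
    simp only [hEdef, hpow, hq, one_mul, sub_zero] at h
    linarith
  refine ⟨?_, main⟩
  have := main 2 (le_refl 2)
  norm_num at this
  exact this
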